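/- Let x₀ > 0 and N ∈ ℕ*. The function η(x) = (2√(x x₀)/(x+x₀)) · Σ_{k=0}^{N−1} ((2k)!/(2^{2k}(k!)²)) ((x−x₀)/(x+x₀))^{2k} satisfies |η(x)| < 1 for all x > 0 with x ≠ x₀. -/

import Mathlib

open Finset

noncomputable def cc (k : ℕ) : ℝ :=
  (Nat.factorial (2 * k) : ℝ) / (2 ^ (2 * k) * (Nat.factorial k : ℝ) ^ 2)

lemma cc_pos (k : ℕ) : 0 < cc k := by
  unfold cc
  have h1 : (0:ℝ) < (Nat.factorial (2*k) : ℝ) := by exact_mod_cast (Nat.factorial_pos _)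
  have h2 : (0:ℝ) < (Nat.factorial k : ℝ) := by exact_mod_cast (Nat.factorial_pos _)
  positivity

lemma cc_zero : cc 0 = 1 := by
  unfold cc; simp [Nat.factorial]

lemma cc_rec (k : ℕ) : (2*(k:ℝ)+2) * cc (k+1) = (2*(k:ℝ)+1) * cc k := by
  have e1 : (Nat.factorial (2*(k+1)) : ℝ) = (2*(k:ℝ)+2)*((2*(k:ℝ)+1)*(Nat.factorial (2*k) : ℝ)) := by
    have h : 2*(k+1) = (2*k) + 1 + 1 := by omega
    rw [h, Nat.factorial_succ, Nat.factorial_succ]; push_cast; ring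
  have e2 : (Nat.factorial (k+1) : ℝ) = ((k:ℝ)+1) * (Nat.factorial k : ℝ) := by
    rw [Nat.factorial_succ]; push_cast; ring
  have e3 : (2:ℝ)^(2*(k+1)) = 4 * 2^(2*k) := by
    have h : 2*(k+1) = 2*k + 2 := by omega
    rw [h, pow_add]; ring
  have hf : (Nat.factorial k : ℝ) ≠ 0 := by exact_mod_cast (Nat.factorial_pos k).ne'
  have hp : (2:ℝ)^(2*k) ≠ 0 := by positivity
  unfold cc
  rw [e1, e2, e3]
  field_simp
  ring

lemma cc_conv (n : ℕ) : ∑ p ∈ antidiagonal n, cc p.1 * cc p.2 = 1 := by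
  induction n with
  | zero => simp [cc_zero]
  | succ n ih =>
    -- weighted symmetry: 2 * ∑ p.1 * (cc p.1 * cc p.2) = n * ∑ cc p.1 * cc p.2
    have key : ∀ m : ℕ, 2 * ∑ p ∈ antidiagonal m, (p.1:ℝ) * (cc p.1 * cc p.2)
        = (m:ℝ) * ∑ p ∈ antidiagonal m, cc p.1 * cc p.2 := by
      intro m
      have hswap : ∑ p ∈ antidiagonal m, (p.1:ℝ) * (cc p.1 * cc p.2)
          = ∑ p ∈ antidiagonal m, (p.2:ℝ) * (cc p.1 * cc p.2) := by
        nth_rewrite 2 [← Finset.HasAntidiagonal.map_swap_antidiagonal (n := m)]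
        rw [Finset.sum_map]
        simp only [Function.Embedding.coeFn_mk, Prod.fst_swap, Prod.snd_swap]
        apply Finset.sum_congr rfl
        intro p hp; ring
      rw [two_mul, Finset.mul_sum]
      nth_rewrite 2 [hswap]
      rw [← Finset.sum_add_distrib]
      apply Finset.sum_congr rfl
      intro p hp
      have := Finset.HasAntidiagonal.mem_antidiagonal.mp hp
      have hc : (p.1:ℝ) + (p.2:ℝ) = (m:ℝ) := by exact_mod_cast congrArg Nat.cast this
      linear_combination (cc p.1 * cc p.2) * hc
    have step : ((n:ℝ)+1) * ∑ p ∈ antidiagonal (n+1), cc p.1 * cc p.2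
        = ((n:ℝ)+1) * ∑ p ∈ antidiagonal n, cc p.1 * cc p.2 := by
      have h1 := key (n+1)
      push_cast at h1
      -- compute the weighted sum over antidiagonal (n+1) via antidiagonal_succ
      have h2 : ∑ p ∈ antidiagonal (n+1), (p.1:ℝ) * (cc p.1 * cc p.2)
          = ∑ p ∈ antidiagonal n, ((p.1:ℝ)+1) * (cc (p.1+1) * cc p.2) := by
        rw [Finset.Nat.antidiagonal_succ, Finset.sum_cons, Finset.sum_map]
        simp only [Nat.cast_zero, zero_mul, zero_add, Function.Embedding.coe_prodMap,
          Function.Embedding.coeFn_mk, Function.Embedding.refl_apply, Prod.map_fst, Prod.map_snd]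
        apply Finset.sum_congr rfl
        intro p hp
        push_cast
        ring
      have h3 : ∀ p : ℕ × ℕ, 2 * (((p.1:ℝ)+1) * (cc (p.1+1) * cc p.2))
          = (2*(p.1:ℝ)+1) * (cc p.1 * cc p.2) := by
        intro p
        have h := cc_rec p.1
        linear_combination cc p.2 * h
      have h4 : 2 * ∑ p ∈ antidiagonal (n+1), (p.1:ℝ) * (cc p.1 * cc p.2)
          = 2 * ∑ p ∈ antidiagonal n, (p.1:ℝ) * (cc p.1 * cc p.2)
            + ∑ p ∈ antidiagonal n, cc p.1 * cc p.2 := by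
        rw [h2, Finset.mul_sum]
        rw [Finset.mul_sum, ← Finset.sum_add_distrib]
        apply Finset.sum_congr rfl
        intro p hp
        rw [h3 p]
        ring
      rw [key n] at h4
      linarith [h1, h4]
    have hpos : (0:ℝ) < (n:ℝ) + 1 := by positivity
    have := mul_left_cancel₀ hpos.ne' step
    rw [this, ih]

/-- Strict bound `|η(x)| < 1` for `x ≠ x₀` for the normalized Laplace precertificate. -/
theorem stmt5 (N : ℕ) (hN : 0 < N) (x₀ : ℝ) (hx₀ : 0 < x₀)
    (η : ℝ → ℝ)
    (hη : ∀ x, η x = (2 * Real.sqrt (x * x₀) / (x + x₀)) *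
      ∑ k ∈ Finset.range N,
        ((Nat.factorial (2 * k) : ℝ) / (2 ^ (2 * k) * (Nat.factorial k : ℝ) ^ 2)) *
          ((x - x₀) / (x + x₀)) ^ (2 * k)) :
    ∀ x : ℝ, 0 < x → x ≠ x₀ → |η x| < 1 := by
  intro x hx hne
  have hs : 0 < x + x₀ := by linarith
  set z : ℝ := (x - x₀) / (x + x₀) with hz
  have hzlt : |z| < 1 := by
    rw [hz, abs_div, abs_of_pos hs, div_lt_one hs, abs_lt]
    constructor <;> linarith
  have hzne : z ≠ 0 := div_ne_zero (sub_ne_zero.mpr hne) hs.ne'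
  set t : ℝ := z ^ 2 with ht
  have htne : t ≠ 0 := pow_ne_zero 2 hzne
  have ht0 : 0 < t := lt_of_le_of_ne (sq_nonneg z) (Ne.symm htne)
  have ht1 : t < 1 := by
    rw [ht]
    nlinarith [sq_abs z, abs_nonneg z, hzlt]
  have h1t : 0 < 1 - t := by linarith
  set A : ℝ := ∑ k ∈ Finset.range N, cc k * t ^ k with hA
  have hηx : η x = Real.sqrt (1 - t) * A := by
    rw [hη x]
    congr 1
    · have h4 : 1 - t = 4 * (x * x₀) / (x + x₀) ^ 2 := by
        rw [ht, hz]; field_simp; ring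
      have h5 : (2 * Real.sqrt (x * x₀) / (x + x₀)) ^ 2 = 4 * (x * x₀) / (x + x₀) ^ 2 := by
        rw [div_pow, mul_pow, Real.sq_sqrt (by positivity)]; ring
      rw [h4, ← h5, Real.sqrt_sq (by positivity)]
    · rw [hA]
      apply Finset.sum_congr rfl
      intro k _
      simp only [cc, ht, hz, pow_mul]
  have hA0 : 0 < A := by
    rw [hA]
    apply Finset.sum_pos
    · intro k _
      exact mul_pos (cc_pos k) (pow_pos ht0 k)
    · exact ⟨0, Finset.mem_range.mpr hN⟩
  have hkey : (1 - t) * A ^ 2 < 1 := by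
    have hA2 : A ^ 2 = ∑ p ∈ Finset.range N ×ˢ Finset.range N,
        cc p.1 * cc p.2 * t ^ (p.1 + p.2) := by
      rw [hA, sq, Finset.sum_mul_sum, Finset.sum_product]
      apply Finset.sum_congr rfl; intro i _
      apply Finset.sum_congr rfl; intro j _
      rw [pow_add]; ring
    have hsub : Finset.range N ×ˢ Finset.range N ⊆
        (Finset.range (2 * N - 1)).biUnion (fun m => antidiagonal m) := by
      intro p hp
      rw [Finset.mem_product, Finset.mem_range, Finset.mem_range] at hp
      rw [Finset.mem_biUnion]
      exact ⟨p.1 + p.2, Finset.mem_range.mpr (by omega), Finset.HasAntidiagonal.mem_antidiagonal.mpr rfl⟩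
    have hle : ∑ p ∈ Finset.range N ×ˢ Finset.range N, cc p.1 * cc p.2 * t ^ (p.1 + p.2)
        ≤ ∑ p ∈ (Finset.range (2 * N - 1)).biUnion (fun m => antidiagonal m),
            cc p.1 * cc p.2 * t ^ (p.1 + p.2) := by
      apply Finset.sum_le_sum_of_subset_of_nonneg hsub
      intro p _ _
      have h1 := cc_pos p.1
      have h2 := cc_pos p.2
      positivity
    have hbi : ∑ p ∈ (Finset.range (2 * N - 1)).biUnion (fun m => antidiagonal m),
          cc p.1 * cc p.2 * t ^ (p.1 + p.2)
        = ∑ m ∈ Finset.range (2 * N - 1), ∑ p ∈ antidiagonal m,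
            cc p.1 * cc p.2 * t ^ (p.1 + p.2) := by
      apply Finset.sum_biUnion
      intro m1 _ m2 _ h12
      simp only [Function.onFun, Finset.disjoint_left, Finset.HasAntidiagonal.mem_antidiagonal]
      rintro ⟨a, b⟩ hab
      simp only [Finset.HasAntidiagonal.mem_antidiagonal] at hab ⊢
      omega
    have hinner : ∀ m : ℕ, ∑ p ∈ antidiagonal m, cc p.1 * cc p.2 * t ^ (p.1 + p.2) = t ^ m := by
      intro m
      have h : ∀ p ∈ antidiagonal m, cc p.1 * cc p.2 * t ^ (p.1 + p.2)
          = cc p.1 * cc p.2 * t ^ m := by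
        intro p hp
        rw [Finset.HasAntidiagonal.mem_antidiagonal.mp hp]
      rw [Finset.sum_congr rfl h, ← Finset.sum_mul, cc_conv, one_mul]
    have hAle : A ^ 2 ≤ ∑ m ∈ Finset.range (2 * N - 1), t ^ m := by
      rw [hA2]
      refine hle.trans (le_of_eq ?_)
      rw [hbi]
      exact Finset.sum_congr rfl fun m _ => hinner m
    have hgm : (1 - t) * ∑ m ∈ Finset.range (2 * N - 1), t ^ m = 1 - t ^ (2 * N - 1) := by
      have h := geom_sum_mul t (2 * N - 1)
      linear_combination -h
    have htM : 0 < t ^ (2 * N - 1) := pow_pos ht0 _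
    calc (1 - t) * A ^ 2 ≤ (1 - t) * ∑ m ∈ Finset.range (2 * N - 1), t ^ m :=
          mul_le_mul_of_nonneg_left hAle h1t.le
      _ = 1 - t ^ (2 * N - 1) := hgm
      _ < 1 := by linarith
  rw [hηx]
  have hsq : (Real.sqrt (1 - t) * A) ^ 2 = (1 - t) * A ^ 2 := by
    rw [mul_pow, Real.sq_sqrt h1t.le]
  have hnn : 0 ≤ Real.sqrt (1 - t) * A := mul_nonneg (Real.sqrt_nonneg _) hA0.le
  rw [abs_of_nonneg hnn]
  nlinarith [hkey, hsq, hnn]
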